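/- Let a ∈ [0,1), b ∈ (0,1] with a < b, and let δ ∈ (0,1). Then the sequence of partial sums 1_J(x,a,b) = Σ_{j=0}^{2J} c_j(x)·g_j(a,b), J = 0,1,2,…, converges uniformly to 𝟙(a < x < b) for x ranging over the set U_{δ,(a,b)} = (0,1) with the interval (a−δ, a+δ) removed when a > 0 and the interval (b−δ, b+δ) removed when b < 1. -/

import Mathlib

/-- `cfun j x`: c₀(x)=1, c_{2j-1}(x)=cos((2j-1)x), c_{2j}(x)=sin((2j-1)x). -/
noncomputable def cfun (j : ℕ) (x : ℝ) : ℝ :=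
  if j = 0 then 1
  else if j % 2 = 1 then Real.cos ((j : ℝ) * x)
  else Real.sin (((j : ℝ) - 1) * x)

/-- `gfun j a b`: the coefficients g_j(a,b). -/
noncomputable def gfun (j : ℕ) (a b : ℝ) : ℝ :=
  if j = 0 then
    1 - (1 / 2) * ((if 0 < a then (1 : ℝ) else 0) + (if b < 1 then (1 : ℝ) else 0))
  else if j % 2 = 1 then
    (2 / (Real.pi * (j : ℝ))) *
      ((if b < 1 then (1 : ℝ) else 0) * Real.sin ((j : ℝ) * b) -
        (if 0 < a then (1 : ℝ) else 0) * Real.sin ((j : ℝ) * a))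
  else
    (2 / (Real.pi * ((j : ℝ) - 1))) *
      ((if 0 < a then (1 : ℝ) else 0) * Real.cos (((j : ℝ) - 1) * a) -
        (if b < 1 then (1 : ℝ) else 0) * Real.cos (((j : ℝ) - 1) * b))

/-- Indicator of the open interval (a,b). -/
noncomputable def indIoo (a b x : ℝ) : ℝ := if a < x ∧ x < b then 1 else 0

/-- The Jth partial sum 1_J(x,a,b) = Σ_{j=0}^{2J} c_j(x)·g_j(a,b). -/
noncomputable def oneJ (J : ℕ) (x a b : ℝ) : ℝ :=
  ∑ j ∈ Finset.range (2 * J + 1), cfun j x * gfun j a b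

/-- The set U_{δ,(a,b)}: (0,1) with (a-δ,a+δ) removed when a>0 and (b-δ,b+δ) removed when b<1. -/
def Uset (δ a b : ℝ) : Set ℝ :=
  {x | x ∈ Set.Ioo (0 : ℝ) 1 ∧ (0 < a → x ∉ Set.Ioo (a - δ) (a + δ)) ∧
    (b < 1 → x ∉ Set.Ioo (b - δ) (b + δ))}

set_option maxHeartbeats 1000000

open Real Filter Finset

noncomputable def Fsum (J : ℕ) (t : ℝ) : ℝ :=
  ∑ j ∈ Finset.range J, Real.sin ((2 * (j : ℝ) + 1) * t) / (2 * (j : ℝ) + 1)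

noncomputable def Ssum (J : ℕ) (t : ℝ) : ℝ :=
  ∑ j ∈ Finset.range J, Real.sin ((2 * (j : ℝ) + 1) * t)

lemma sin_key (c t : ℝ) : Real.sin ((2 * c + 1) * t) * Real.sin t
    = Real.sin ((c + 1) * t) ^ 2 - Real.sin (c * t) ^ 2 := by
  rw [show (2 * c + 1) * t = c * t + (c * t + t) by ring,
    show (c + 1) * t = c * t + t by ring, Real.sin_add (c * t) (c * t + t),
    Real.sin_add (c * t) t, Real.cos_add (c * t) t]
  nlinarith [Real.sin_sq_add_cos_sq (c * t), Real.sin_sq_add_cos_sq t]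

lemma Ssum_mul (n : ℕ) (t : ℝ) : Ssum n t * Real.sin t = Real.sin ((n : ℝ) * t) ^ 2 := by
  induction n with
  | zero => simp [Ssum]
  | succ n ih =>
    rw [Ssum, Finset.sum_range_succ, ← Ssum, add_mul, ih, sin_key]
    push_cast
    ring

lemma abs_Ssum_le {t : ℝ} (ht : 0 < Real.sin t) (n : ℕ) : |Ssum n t| ≤ 1 / Real.sin t := by
  have h := Ssum_mul n t
  have h2 : Ssum n t = Real.sin ((n : ℝ) * t) ^ 2 / Real.sin t := by
    field_simp at h ⊢; linarith
  rw [h2, abs_div, abs_of_pos ht, abs_of_nonneg (sq_nonneg _)]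
  have := Real.sin_sq_le_one ((n : ℝ) * t)
  gcongr

lemma Fsum_tail {t M : ℝ} (hM : ∀ n, |Ssum n t| ≤ M) {J N : ℕ} (h : J ≤ N) :
    |Fsum N t - Fsum J t| ≤ 3 * M / (2 * (J : ℝ) + 1) := by
  set b : ℕ → ℝ := fun j => 1 / (2 * (j : ℝ) + 1) with hbdef
  have hbpos : ∀ j : ℕ, 0 < b j := by
    intro j; apply div_pos one_pos; positivity
  have hbmono : ∀ i j : ℕ, i ≤ j → b j ≤ b i := by
    intro i j hij
    apply div_le_div_of_nonneg_left one_pos.le (by positivity)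
    have : (i : ℝ) ≤ j := by exact_mod_cast hij
    linarith
  have hM0 : 0 ≤ M := le_trans (abs_nonneg _) (hM 0)
  set A : ℕ → ℝ := fun n => Fsum n t - Fsum J t - Ssum n t * b n + Ssum J t * b J with hAdef
  have hstep : ∀ n : ℕ, A (n + 1) = A n + Ssum (n + 1) t * (b n - b (n + 1)) := by
    intro n
    have h1 : Fsum (n + 1) t = Fsum n t + Real.sin ((2 * (n : ℝ) + 1) * t) / (2 * (n : ℝ) + 1) := by
      rw [Fsum, Finset.sum_range_succ]; rfl
    have h2 : Ssum (n + 1) t = Ssum n t + Real.sin ((2 * (n : ℝ) + 1) * t) := by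
      simp [Ssum, Finset.sum_range_succ]
    have hb : b n = 1 / (2 * (n : ℝ) + 1) := rfl
    simp only [hAdef, h1, h2, hb]
    field_simp
    ring
  have key : ∀ m : ℕ, |A (J + m)| ≤ M * (b J - b (J + m)) := by
    intro m
    induction m with
    | zero => simp [hAdef]
    | succ m ih =>
      have := hstep (J + m)
      rw [show J + (m + 1) = (J + m) + 1 by ring, this]
      calc |A (J + m) + Ssum (J + m + 1) t * (b (J + m) - b (J + m + 1))|
          ≤ |A (J + m)| + |Ssum (J + m + 1) t| * |b (J + m) - b (J + m + 1)| := by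
            rw [← abs_mul]; exact abs_add_le _ _
        _ ≤ M * (b J - b (J + m)) + M * (b (J + m) - b (J + m + 1)) := by
            have h1 := hM (J + m + 1)
            have h2 : |b (J + m) - b (J + m + 1)| = b (J + m) - b (J + m + 1) := by
              rw [abs_of_nonneg]; linarith [hbmono (J + m) (J + m + 1) (by omega)]
            rw [h2]
            have hd : 0 ≤ b (J + m) - b (J + m + 1) := by
              linarith [hbmono (J + m) (J + m + 1) (by omega)]
            exact add_le_add ih (mul_le_mul_of_nonneg_right h1 hd)
        _ = M * (b J - b (J + m + 1)) := by ring
  obtain ⟨m, rfl⟩ := Nat.exists_eq_add_of_le h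
  have hA := key m
  have h1 : Fsum (J + m) t - Fsum J t = A (J + m) + Ssum (J + m) t * b (J + m) - Ssum J t * b J := by
    simp only [hAdef]; ring
  rw [h1]
  have : 3 * M / (2 * (J : ℝ) + 1) = 3 * (M * b J) := by
    simp only [hbdef]; field_simp
  rw [this]
  calc |A (J + m) + Ssum (J + m) t * b (J + m) - Ssum J t * b J|
      ≤ |A (J + m)| + |Ssum (J + m) t| * b (J + m) + |Ssum J t| * b J := by
        have := abs_of_pos (hbpos (J + m))
        have := abs_of_pos (hbpos J)
        calc _ ≤ |A (J + m) + Ssum (J + m) t * b (J + m)| + |Ssum J t * b J| := abs_sub _ _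
          _ ≤ |A (J + m)| + |Ssum (J + m) t * b (J + m)| + |Ssum J t * b J| := by
              gcongr; exact abs_add_le _ _
          _ = _ := by rw [abs_mul, abs_mul, abs_of_pos (hbpos (J + m)), abs_of_pos (hbpos J)]
    _ ≤ M * (b J - b (J + m)) + M * b (J + m) + M * b J := by
        have := mul_le_mul_of_nonneg_right (hM (J + m)) (hbpos (J + m)).le
        have := mul_le_mul_of_nonneg_right (hM J) (hbpos J).le
        linarith [hA]
    _ ≤ 3 * (M * b J) := by
        nlinarith [hbpos (J + m), hbmono J (J + m) (by omega), hM0,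
          mul_nonneg hM0 (hbpos (J + m)).le]

section PW

variable {t : ℝ}

lemma he1L (h0 : 0 < t) (hp : t < π) :
    (1 : ℂ) + Complex.exp ((t:ℂ) * Complex.I) = ((2 * Real.cos (t/2) : ℝ) : ℂ) *
      (Complex.cos ((t/2 : ℝ) : ℂ) + Complex.sin ((t/2 : ℝ) : ℂ) * Complex.I) := by
  have hc2 : Real.cos t = 2 * Real.cos (t/2) ^ 2 - 1 := by
    have := Real.cos_two_mul (t / 2); rw [show 2 * (t / 2) = t by ring] at this; linarith
  have hs2 : Real.sin t = 2 * Real.sin (t/2) * Real.cos (t/2) := by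
    have := Real.sin_two_mul (t / 2); rw [show 2 * (t / 2) = t by ring] at this; linarith
  apply Complex.ext <;>
    simp only [Complex.exp_ofReal_mul_I_re, Complex.exp_ofReal_mul_I_im, Complex.add_re,
      Complex.add_im, Complex.mul_re, Complex.mul_im,
      Complex.cos_ofReal_re, Complex.cos_ofReal_im, Complex.sin_ofReal_re, Complex.sin_ofReal_im,
      Complex.ofReal_re, Complex.ofReal_im, Complex.I_re, Complex.I_im,
      Complex.one_re, Complex.one_im] <;>
    nlinarith [hc2, hs2]

lemma he2L (h0 : 0 < t) (hp : t < π) :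
    (1 : ℂ) - Complex.exp ((t:ℂ) * Complex.I) = ((2 * Real.sin (t/2) : ℝ) : ℂ) *
      (Complex.cos ((t/2 - π/2 : ℝ) : ℂ) + Complex.sin ((t/2 - π/2 : ℝ) : ℂ) * Complex.I) := by
  have hc2 : Real.cos t = 2 * Real.cos (t/2) ^ 2 - 1 := by
    have := Real.cos_two_mul (t / 2); rw [show 2 * (t / 2) = t by ring] at this; linarith
  have hs2 : Real.sin t = 2 * Real.sin (t/2) * Real.cos (t/2) := by
    have := Real.sin_two_mul (t / 2); rw [show 2 * (t / 2) = t by ring] at this; linarith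
  have hsct := Real.sin_sq_add_cos_sq (t/2)
  have hcθ : Real.cos (t/2 - π/2) = Real.sin (t/2) := by rw [Real.cos_sub]; simp
  have hsθ : Real.sin (t/2 - π/2) = -Real.cos (t/2) := by rw [Real.sin_sub]; simp
  apply Complex.ext <;>
    simp only [Complex.exp_ofReal_mul_I_re, Complex.exp_ofReal_mul_I_im, Complex.sub_re,
      Complex.sub_im, Complex.mul_re, Complex.mul_im, Complex.add_re, Complex.add_im,
      Complex.cos_ofReal_re, Complex.cos_ofReal_im, Complex.sin_ofReal_re, Complex.sin_ofReal_im,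
      Complex.ofReal_re, Complex.ofReal_im, Complex.I_re, Complex.I_im,
      Complex.one_re, Complex.one_im, hcθ, hsθ] <;>
    nlinarith [hc2, hs2, hsct]

lemma hcoshalfL (h0 : 0 < t) (hp : t < π) : 0 < Real.cos (t / 2) :=
  Real.cos_pos_of_mem_Ioo ⟨by linarith [Real.pi_pos], by linarith⟩

lemma hsinhalfL (h0 : 0 < t) (hp : t < π) : 0 < Real.sin (t / 2) :=
  Real.sin_pos_of_pos_of_lt_pi (by linarith) (by linarith [Real.pi_pos])

lemma harg1L (h0 : 0 < t) (hp : t < π) :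
    (Complex.log (1 + Complex.exp ((t:ℂ) * Complex.I))).im = t / 2 := by
  rw [Complex.log_im, he1L h0 hp,
    Complex.arg_real_mul _ (by linarith [hcoshalfL h0 hp]),
    Complex.arg_cos_add_sin_mul_I ⟨by linarith [Real.pi_pos], by linarith⟩]

lemma harg2L (h0 : 0 < t) (hp : t < π) :
    (Complex.log (1 - Complex.exp ((t:ℂ) * Complex.I))).im = t / 2 - π / 2 := by
  rw [Complex.log_im, he2L h0 hp,
    Complex.arg_real_mul _ (by linarith [hsinhalfL h0 hp]),
    Complex.arg_cos_add_sin_mul_I ⟨by linarith [Real.pi_pos], by linarith [Real.pi_pos]⟩]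

lemma hslit1L (h0 : 0 < t) (hp : t < π) :
    (1 : ℂ) + Complex.exp ((t:ℂ) * Complex.I) ∈ Complex.slitPlane := by
  rw [Complex.mem_slitPlane_iff]
  left
  have h : ((1 : ℂ) + Complex.exp ((t:ℂ) * Complex.I)).re = 1 + Real.cos t := by
    simp [Complex.add_re, Complex.exp_ofReal_mul_I_re]
  rw [h]
  have : Real.cos π < Real.cos t := by
    apply Real.cos_lt_cos_of_nonneg_of_le_pi h0.le le_rfl hp
  rw [Real.cos_pi] at this
  linarith

lemma hslit2L (h0 : 0 < t) (hp : t < π) :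
    (1 : ℂ) - Complex.exp ((t:ℂ) * Complex.I) ∈ Complex.slitPlane := by
  rw [Complex.mem_slitPlane_iff]
  left
  have h : ((1 : ℂ) - Complex.exp ((t:ℂ) * Complex.I)).re = 1 - Real.cos t := by
    simp [Complex.sub_re, Complex.exp_ofReal_mul_I_re]
  rw [h]
  have : Real.cos t < Real.cos 0 := by
    apply Real.cos_lt_cos_of_nonneg_of_le_pi le_rfl hp.le h0
  rw [Real.cos_zero] at this
  linarith

lemma hcontL (h0 : 0 < t) (hp : t < π) :
    Filter.Tendsto (fun x : ℝ => (Complex.log (1 + (x:ℂ) * Complex.exp ((t:ℂ) * Complex.I))).im / 2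
      - (Complex.log (1 - (x:ℂ) * Complex.exp ((t:ℂ) * Complex.I))).im / 2)
      (nhds (1:ℝ)) (nhds (π / 4)) := by
  have t1 : Filter.Tendsto (fun x : ℝ => (1:ℂ) + (x:ℂ) * Complex.exp ((t:ℂ) * Complex.I))
      (nhds 1) (nhds ((1:ℂ) + Complex.exp ((t:ℂ) * Complex.I))) := by
    have hcnt : Continuous (fun x : ℝ => (1:ℂ) + (x:ℂ) * Complex.exp ((t:ℂ) * Complex.I)) := by
      fun_prop
    have := hcnt.tendsto 1
    simpa using this
  have t2 : Filter.Tendsto (fun x : ℝ => (1:ℂ) - (x:ℂ) * Complex.exp ((t:ℂ) * Complex.I))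
      (nhds 1) (nhds ((1:ℂ) - Complex.exp ((t:ℂ) * Complex.I))) := by
    have hcnt : Continuous (fun x : ℝ => (1:ℂ) - (x:ℂ) * Complex.exp ((t:ℂ) * Complex.I)) := by
      fun_prop
    have := hcnt.tendsto 1
    simpa using this
  have l1 := (continuousAt_clog (hslit1L h0 hp)).tendsto.comp t1
  have l2 := (continuousAt_clog (hslit2L h0 hp)).tendsto.comp t2
  have i1 := (Complex.continuous_im.tendsto _).comp l1
  have i2 := (Complex.continuous_im.tendsto _).comp l2
  have comb := Filter.Tendsto.sub (i1.div_const 2) (i2.div_const 2)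
  rw [harg1L h0 hp, harg2L h0 hp] at comb
  have : t / 2 / 2 - (t / 2 - π / 2) / 2 = π / 4 := by ring
  rw [this] at comb
  exact comb

lemma heqL (h0 : 0 < t) (hp : t < π) {x : ℝ} (hx : x ∈ Set.Ioo (-1 : ℝ) 1) :
    ∑' n : ℕ, (if n % 2 = 1 then Real.sin ((n : ℝ) * t) / (n : ℝ) else 0) * x ^ n
      = (Complex.log (1 + (x:ℂ) * Complex.exp ((t:ℂ) * Complex.I))).im / 2
        - (Complex.log (1 - (x:ℂ) * Complex.exp ((t:ℂ) * Complex.I))).im / 2 := by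
  have hzn : ‖(x:ℂ) * Complex.exp ((t:ℂ) * Complex.I)‖ < 1 := by
    rw [norm_mul]
    have hw1 : ‖Complex.exp ((t:ℂ) * Complex.I)‖ = 1 := by
      exact Complex.norm_exp_ofReal_mul_I t
    rw [hw1, mul_one, Complex.norm_real, Real.norm_eq_abs, abs_lt]
    exact ⟨hx.1, hx.2⟩
  set z : ℂ := (x:ℂ) * Complex.exp ((t:ℂ) * Complex.I) with hz
  have h1 := Complex.hasSum_taylorSeries_neg_log hzn
  have h2 := Complex.hasSum_taylorSeries_neg_log (z := -z) (by rwa [norm_neg])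
  rw [sub_neg_eq_add] at h2
  have h3 := h1.sub h2
  have h4 := ((Complex.hasSum_iff _ _).mp h3).2
  have h5 : ∀ n : ℕ, (z ^ n / (n : ℂ) - (-z) ^ n / (n : ℂ)).im
      = 2 * ((if n % 2 = 1 then Real.sin ((n : ℝ) * t) / (n : ℝ) else 0) * x ^ n) := by
    intro n
    rcases Nat.even_or_odd n with hn | hn
    · rw [Even.neg_pow hn, sub_self]
      have hn2 : ¬ (n % 2 = 1) := by rw [Nat.even_iff] at hn; omega
      simp [hn2]
    · rw [Odd.neg_pow hn, neg_div, sub_neg_eq_add, ← two_mul]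
      have hn2 : n % 2 = 1 := Nat.odd_iff.mp hn
      have hn0 : (n : ℝ) ≠ 0 := by
        have : n ≠ 0 := by omega
        exact_mod_cast this
      have hzp : z ^ n = ((x ^ n : ℝ) : ℂ) * Complex.exp ((((n : ℝ) * t : ℝ)) * Complex.I) := by
        rw [hz, mul_pow, ← Complex.exp_nat_mul]
        push_cast
        ring_nf
      rw [hzp]
      simp only [hn2, if_pos]
      simp only [Complex.mul_im, Complex.div_im, Complex.mul_re, Complex.ofReal_re,
        Complex.ofReal_im, Complex.exp_ofReal_mul_I_re, Complex.exp_ofReal_mul_I_im,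
        Complex.natCast_re, Complex.natCast_im, Complex.normSq_natCast, Complex.re_ofNat, Complex.im_ofNat]
      field_simp
      ring
  have h6 : HasSum (fun n : ℕ =>
      2 * ((if n % 2 = 1 then Real.sin ((n : ℝ) * t) / (n : ℝ) else 0) * x ^ n))
      ((-Complex.log (1 - z) - -Complex.log (1 + z)).im) := by
    have hfun : (fun n : ℕ => (z ^ n / (n : ℂ) - (-z) ^ n / (n : ℂ)).im)
        = (fun n : ℕ =>
          2 * ((if n % 2 = 1 then Real.sin ((n : ℝ) * t) / (n : ℝ) else 0) * x ^ n)) :=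
      funext h5
    exact hfun ▸ h4
  have h7 := h6.div_const 2
  have h8 : HasSum (fun n : ℕ =>
      (if n % 2 = 1 then Real.sin ((n : ℝ) * t) / (n : ℝ) else 0) * x ^ n)
      ((-Complex.log (1 - z) - -Complex.log (1 + z)).im / 2) := by
    convert h7 using 2 with n
    case e'_3 => rfl
    ring
  rw [h8.tsum_eq]
  simp only [Complex.sub_im, Complex.neg_im]
  ring

lemma tendsto_Fsum (h0 : 0 < t) (hp : t < π) :
    Filter.Tendsto (fun J => Fsum J t) atTop (nhds (π / 4)) := by
  have hsin : 0 < Real.sin t := Real.sin_pos_of_pos_of_lt_pi h0 hp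
  have hM : ∀ n, |Ssum n t| ≤ 1 / Real.sin t := abs_Ssum_le hsin
  have h2N : Filter.Tendsto (fun N : ℕ => 2 * (N : ℝ) + 1) atTop atTop := by
    apply Filter.tendsto_atTop_add_const_right
    exact (tendsto_natCast_atTop_atTop).const_mul_atTop two_pos
  have hC : CauchySeq (fun J => Fsum J t) := by
    refine cauchySeq_of_le_tendsto_0 (fun N => 6 * (1 / Real.sin t) / (2 * (N : ℝ) + 1)) ?_ ?_
    · intro n m N hn hm
      have h1 := Fsum_tail hM hn
      have h2 := Fsum_tail hM hm
      rw [Real.dist_eq]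
      calc |Fsum n t - Fsum m t| ≤ |Fsum n t - Fsum N t| + |Fsum N t - Fsum m t| :=
            abs_sub_le _ _ _
        _ ≤ 3 * (1 / Real.sin t) / (2 * (N:ℝ) + 1) + 3 * (1 / Real.sin t) / (2 * (N:ℝ) + 1) := by
            rw [abs_sub_comm (Fsum N t)]; exact add_le_add h1 h2
        _ = 6 * (1 / Real.sin t) / (2 * (N : ℝ) + 1) := by ring
    · exact Filter.Tendsto.div_atTop tendsto_const_nhds h2N
  obtain ⟨L, hL⟩ := cauchySeq_tendsto_of_complete hC
  have hL4 : L = π / 4 := by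
    have hpart : ∀ N, ∑ n ∈ Finset.range N,
        (if n % 2 = 1 then Real.sin ((n : ℝ) * t) / (n : ℝ) else 0) = Fsum (N / 2) t := by
      intro N
      induction N with
      | zero => simp [Fsum]
      | succ N ih =>
        rw [Finset.sum_range_succ, ih]
        rcases Nat.even_or_odd N with hN | hN
        · obtain ⟨k, rfl⟩ := hN
          have h2 : ¬ ((k + k) % 2 = 1) := by omega
          have h3 : (k + k) / 2 = k := by omega
          have h4 : (k + k + 1) / 2 = k := by omega
          simp [h2, h3, h4]
        · obtain ⟨k, hk⟩ := hN
          subst hk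
          have h2 : (2 * k + 1) % 2 = 1 := by omega
          have h3 : (2 * k + 1) / 2 = k := by omega
          have h4 : (2 * k + 1 + 1) / 2 = k + 1 := by omega
          rw [h3, h4]
          simp only [h2, if_pos]
          have hstep : Fsum (k + 1) t
              = Fsum k t + Real.sin ((2 * (k : ℝ) + 1) * t) / (2 * (k : ℝ) + 1) :=
            Finset.sum_range_succ _ k
          rw [hstep]
          push_cast
          ring_nf
    have hdiv : Filter.Tendsto (fun N : ℕ => N / 2) atTop atTop :=
      Filter.tendsto_atTop_atTop.mpr (fun b => ⟨2 * b, fun a ha => by omega⟩)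
    have hps : Filter.Tendsto (fun N => ∑ n ∈ Finset.range N,
        (if n % 2 = 1 then Real.sin ((n : ℝ) * t) / (n : ℝ) else 0)) atTop (nhds L) := by
      simp only [hpart]
      exact hL.comp hdiv
    have habel := Real.tendsto_tsum_powerSeries_nhdsWithin_lt hps
    have hcont2 := (hcontL h0 hp).mono_left
      (nhdsWithin_le_nhds : nhdsWithin (1:ℝ) (Set.Iio 1) ≤ nhds 1)
    have hfinal : Filter.Tendsto (fun x : ℝ => ∑' n : ℕ,
        (if n % 2 = 1 then Real.sin ((n : ℝ) * t) / (n : ℝ) else 0) * x ^ n)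
        (nhdsWithin 1 (Set.Iio (1:ℝ))) (nhds (π / 4)) := by
      apply Filter.Tendsto.congr' _ hcont2
      filter_upwards [Ioo_mem_nhdsLT_of_mem (show (1:ℝ) ∈ Set.Ioc (-1 : ℝ) 1 by norm_num)]
        with x hx
      exact (heqL h0 hp hx).symm
    exact tendsto_nhds_unique habel hfinal
  rwa [hL4] at hL

end PW

lemma one_lt_pi_div_two : (1 : ℝ) < π / 2 := by linarith [Real.pi_gt_three]

lemma Fsum_close {δ : ℝ} (hδ : 0 < δ) (hδ1 : δ < 1) (J : ℕ) {τ : ℝ} (h1 : δ ≤ τ) (h2 : τ ≤ 1) :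
    |Fsum J τ - π / 4| ≤ 3 / Real.sin δ / (2 * (J : ℝ) + 1) := by
  have hπ2 := one_lt_pi_div_two
  have hsδ : 0 < Real.sin δ := Real.sin_pos_of_pos_of_lt_pi hδ (by linarith)
  have hmono : Real.sin δ ≤ Real.sin τ := by
    apply (Real.strictMonoOn_sin.monotoneOn)
      ⟨by linarith, by linarith⟩ ⟨by linarith, by linarith⟩ h1
  have hsτ : 0 < Real.sin τ := lt_of_lt_of_le hsδ hmono
  have hlim := tendsto_Fsum (lt_of_lt_of_le hδ h1) (by linarith)
  have htend : Filter.Tendsto (fun N => |Fsum N τ - Fsum J τ|) atTop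
      (nhds (|π / 4 - Fsum J τ|)) := ((hlim.sub_const _).abs)
  have hb : |π / 4 - Fsum J τ| ≤ 3 * (1 / Real.sin τ) / (2 * (J : ℝ) + 1) := by
    apply le_of_tendsto htend
    filter_upwards [eventually_ge_atTop J] with N hN
    exact Fsum_tail (abs_Ssum_le hsτ) hN
  rw [abs_sub_comm]
  refine le_trans hb ?_
  rw [show (3 : ℝ) * (1 / Real.sin τ) = 3 / Real.sin τ by ring]
  gcongr

lemma Fsum_neg (J : ℕ) (τ : ℝ) : Fsum J (-τ) = -Fsum J τ := by
  rw [Fsum, Fsum, ← Finset.sum_neg_distrib]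
  apply Finset.sum_congr rfl
  intro j _
  rw [mul_neg, Real.sin_neg, neg_div]

lemma Fsum_sgn_close {δ : ℝ} (hδ : 0 < δ) (hδ1 : δ < 1) (J : ℕ) {τ : ℝ}
    (h1 : δ ≤ |τ|) (h2 : |τ| ≤ 1) :
    |Fsum J τ - (if 0 < τ then π / 4 else -(π / 4))| ≤ 3 / Real.sin δ / (2 * (J : ℝ) + 1) := by
  rcases lt_trichotomy 0 τ with hτ | hτ | hτ
  · rw [if_pos hτ, ← abs_of_pos hτ]
    exact Fsum_close hδ hδ1 J h1 h2
  · exfalso; rw [← hτ, abs_zero] at h1; linarith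
  · rw [if_neg (by linarith)]
    have hm : |(-τ)| = |τ| := abs_neg τ
    have := Fsum_close hδ hδ1 J (τ := -τ) (by rw [abs_of_neg hτ] at h1; linarith)
      (by rw [abs_of_neg hτ] at h2; linarith)
    rw [Fsum_neg] at this
    calc |Fsum J τ - -(π/4)| = |-(Fsum J τ) - π/4| := by rw [← abs_neg]; ring_nf
      _ ≤ _ := this

lemma oneJ_eq (a b : ℝ) (J : ℕ) (x : ℝ) :
    oneJ J x a b = gfun 0 a b + (2 / π) *
      ((if b < 1 then (1:ℝ) else 0) * Fsum J (b - x)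
        - (if 0 < a then (1:ℝ) else 0) * Fsum J (a - x)) := by
  induction J with
  | zero => simp [oneJ, Fsum, cfun]
  | succ J ih =>
    have hstep : oneJ (J + 1) x a b = oneJ J x a b
        + cfun (2 * J + 1) x * gfun (2 * J + 1) a b
        + cfun (2 * J + 2) x * gfun (2 * J + 2) a b := by
      rw [oneJ, oneJ, show 2 * (J + 1) + 1 = (2 * J + 1) + 1 + 1 by omega,
        Finset.sum_range_succ, Finset.sum_range_succ]
    have hc1 : cfun (2 * J + 1) x = Real.cos ((2 * (J:ℝ) + 1) * x) := by
      rw [cfun, if_neg (by omega), if_pos (by omega)]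
      push_cast
      ring_nf
    have hc2 : cfun (2 * J + 2) x = Real.sin ((2 * (J:ℝ) + 1) * x) := by
      rw [cfun, if_neg (by omega), if_neg (by omega)]
      push_cast
      ring_nf
    have hg1 : gfun (2 * J + 1) a b = (2 / (π * (2 * (J:ℝ) + 1))) *
        ((if b < 1 then (1:ℝ) else 0) * Real.sin ((2 * (J:ℝ) + 1) * b) -
          (if 0 < a then (1:ℝ) else 0) * Real.sin ((2 * (J:ℝ) + 1) * a)) := by
      rw [gfun, if_neg (by omega), if_pos (by omega)]
      push_cast
      ring_nf
    have hg2 : gfun (2 * J + 2) a b = (2 / (π * (2 * (J:ℝ) + 1))) *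
        ((if 0 < a then (1:ℝ) else 0) * Real.cos ((2 * (J:ℝ) + 1) * a) -
          (if b < 1 then (1:ℝ) else 0) * Real.cos ((2 * (J:ℝ) + 1) * b)) := by
      rw [gfun, if_neg (by omega), if_neg (by omega)]
      push_cast
      ring_nf
    have hFb : Fsum (J + 1) (b - x)
        = Fsum J (b - x) + Real.sin ((2 * (J:ℝ) + 1) * (b - x)) / (2 * (J:ℝ) + 1) :=
      Finset.sum_range_succ _ J
    have hFa : Fsum (J + 1) (a - x)
        = Fsum J (a - x) + Real.sin ((2 * (J:ℝ) + 1) * (a - x)) / (2 * (J:ℝ) + 1) :=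
      Finset.sum_range_succ _ J
    rw [hstep, ih, hc1, hc2, hg1, hg2, hFb, hFa]
    generalize (if b < 1 then (1:ℝ) else 0) = Ib
    generalize (if 0 < a then (1:ℝ) else 0) = Ia
    have hk : (2 * (J:ℝ) + 1) ≠ 0 := by positivity
    have hπ : (π : ℝ) ≠ 0 := Real.pi_ne_zero
    rw [show (2 * (J:ℝ) + 1) * (b - x) = (2 * (J:ℝ) + 1) * b - (2 * (J:ℝ) + 1) * x by ring,
      show (2 * (J:ℝ) + 1) * (a - x) = (2 * (J:ℝ) + 1) * a - (2 * (J:ℝ) + 1) * x by ring,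
      Real.sin_sub, Real.sin_sub]
    field_simp
    ring

theorem oneJ_tendstoUniformlyOn (a b δ : ℝ) (ha : 0 ≤ a) (ha1 : a < 1) (hb : 0 < b) (hb1 : b ≤ 1)
    (hab : a < b) (hδ : 0 < δ) (hδ1 : δ < 1) :
    TendstoUniformlyOn (fun J x => oneJ J x a b) (fun x => indIoo a b x)
      Filter.atTop (Uset δ a b) := by
  have hπ2 := one_lt_pi_div_two
  have hπ : (0:ℝ) < π := Real.pi_pos
  have hsδ : 0 < Real.sin δ := Real.sin_pos_of_pos_of_lt_pi hδ (by linarith)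
  rw [Metric.tendstoUniformlyOn_iff]
  intro ε hε
  obtain ⟨N, hN⟩ := exists_nat_gt (12 / (π * Real.sin δ * ε))
  filter_upwards [eventually_ge_atTop N] with J hJ
  intro x hx
  obtain ⟨⟨hx0, hx1⟩, hxa, hxb⟩ := hx
  have hεJ : 0 < 3 / Real.sin δ / (2 * (J:ℝ) + 1) := by positivity
  -- bound for the b-term
  have hbB : |(if b < 1 then (1:ℝ) else 0) * Fsum J (b - x)
      - (if b < 1 then (1:ℝ) else 0) * (if 0 < b - x then π/4 else -(π/4))|
      ≤ 3 / Real.sin δ / (2 * (J:ℝ) + 1) := by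
    by_cases hB : b < 1
    · rw [if_pos hB, one_mul, one_mul]
      apply Fsum_sgn_close hδ hδ1
      · have h := hxb hB
        rw [Set.mem_Ioo, not_and_or, not_lt, not_lt] at h
        rw [le_abs]
        rcases h with h | h
        · left; linarith
        · right; linarith
      · rw [abs_le]; constructor <;> linarith
    · rw [if_neg hB, zero_mul, zero_mul, sub_self, abs_zero]
      exact hεJ.le
  -- bound for the a-term
  have haB : |(if 0 < a then (1:ℝ) else 0) * Fsum J (a - x)
      - (if 0 < a then (1:ℝ) else 0) * (if 0 < a - x then π/4 else -(π/4))|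
      ≤ 3 / Real.sin δ / (2 * (J:ℝ) + 1) := by
    by_cases hA : 0 < a
    · rw [if_pos hA, one_mul, one_mul]
      apply Fsum_sgn_close hδ hδ1
      · have h := hxa hA
        rw [Set.mem_Ioo, not_and_or, not_lt, not_lt] at h
        rw [le_abs]
        rcases h with h | h
        · left; linarith
        · right; linarith
      · rw [abs_le]; constructor <;> linarith
    · rw [if_neg hA, zero_mul, zero_mul, sub_self, abs_zero]
      exact hεJ.le
  -- indicator identity
  have hg0 : gfun 0 a b = 1 - (1/2) * ((if 0 < a then (1:ℝ) else 0)
      + (if b < 1 then (1:ℝ) else 0)) := by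
    rw [gfun]; simp
  have hind : indIoo a b x = gfun 0 a b + (2 / π) *
      ((if b < 1 then (1:ℝ) else 0) * (if 0 < b - x then π/4 else -(π/4))
        - (if 0 < a then (1:ℝ) else 0) * (if 0 < a - x then π/4 else -(π/4))) := by
    rw [indIoo, hg0]
    by_cases hA : 0 < a
    · have hxa' := hxa hA
      rw [Set.mem_Ioo, not_and_or, not_lt, not_lt] at hxa'
      by_cases hB : b < 1
      · have hxb' := hxb hB
        rw [Set.mem_Ioo, not_and_or, not_lt, not_lt] at hxb'
        simp only [if_pos hA, if_pos hB]
        rcases hxa' with h | h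
        · rw [if_neg (fun hc => absurd hc.1 (not_lt.mpr (by linarith))),
            if_pos (by linarith : (0:ℝ) < b - x), if_pos (by linarith : (0:ℝ) < a - x)]
          field_simp
          try ring
        · rcases hxb' with h' | h'
          · rw [if_pos ⟨by linarith, by linarith⟩, if_pos (by linarith : (0:ℝ) < b - x),
              if_neg (by push_neg; linarith : ¬ (0:ℝ) < a - x)]
            field_simp
            try ring
          · rw [if_neg (fun hc => absurd hc.2 (not_lt.mpr (by linarith))),
              if_neg (by push_neg; linarith : ¬ (0:ℝ) < b - x),
              if_neg (by push_neg; linarith : ¬ (0:ℝ) < a - x)]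
            field_simp
            try ring
      · simp only [if_pos hA, if_neg hB]
        rcases hxa' with h | h
        · rw [if_neg (fun hc => absurd hc.1 (not_lt.mpr (by linarith))),
            if_pos (by linarith : (0:ℝ) < a - x)]
          field_simp
          try ring
        · rw [if_pos ⟨by linarith, by linarith⟩,
            if_neg (by push_neg; linarith : ¬ (0:ℝ) < a - x)]
          field_simp
          try ring
    · have ha0 : a = 0 := le_antisymm (not_lt.mp hA) ha
      by_cases hB : b < 1
      · have hxb' := hxb hB
        rw [Set.mem_Ioo, not_and_or, not_lt, not_lt] at hxb'
        simp only [if_neg hA, if_pos hB]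
        rcases hxb' with h | h
        · rw [if_pos ⟨by linarith, by linarith⟩, if_pos (by linarith : (0:ℝ) < b - x)]
          field_simp
          try ring
        · rw [if_neg (fun hc => absurd hc.2 (not_lt.mpr (by linarith))),
            if_neg (by push_neg; linarith : ¬ (0:ℝ) < b - x)]
          field_simp
          try ring
      · simp only [if_neg hA, if_neg hB]
        rw [if_pos ⟨by linarith, by linarith⟩]
        norm_num
  -- final estimate
  rw [Real.dist_eq, hind, oneJ_eq]
  have hdiff : (gfun 0 a b + (2 / π) *
      ((if b < 1 then (1:ℝ) else 0) * (if 0 < b - x then π/4 else -(π/4))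
        - (if 0 < a then (1:ℝ) else 0) * (if 0 < a - x then π/4 else -(π/4))))
      - (gfun 0 a b + (2 / π) *
      ((if b < 1 then (1:ℝ) else 0) * Fsum J (b - x)
        - (if 0 < a then (1:ℝ) else 0) * Fsum J (a - x)))
      = -((2/π) * (((if b < 1 then (1:ℝ) else 0) * Fsum J (b - x)
          - (if b < 1 then (1:ℝ) else 0) * (if 0 < b - x then π/4 else -(π/4)))
        - ((if 0 < a then (1:ℝ) else 0) * Fsum J (a - x)
          - (if 0 < a then (1:ℝ) else 0) * (if 0 < a - x then π/4 else -(π/4))))) := by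
    ring
  rw [hdiff, abs_neg, abs_mul, abs_of_pos (by positivity : (0:ℝ) < 2/π)]
  have habs : |((if b < 1 then (1:ℝ) else 0) * Fsum J (b - x)
          - (if b < 1 then (1:ℝ) else 0) * (if 0 < b - x then π/4 else -(π/4)))
        - ((if 0 < a then (1:ℝ) else 0) * Fsum J (a - x)
          - (if 0 < a then (1:ℝ) else 0) * (if 0 < a - x then π/4 else -(π/4)))|
      ≤ 3 / Real.sin δ / (2 * (J:ℝ) + 1) + 3 / Real.sin δ / (2 * (J:ℝ) + 1) :=
    le_trans (abs_sub _ _) (add_le_add hbB haB)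
  calc 2/π * |_| ≤ 2/π * (3 / Real.sin δ / (2 * (J:ℝ) + 1) + 3 / Real.sin δ / (2 * (J:ℝ) + 1)) := by
        exact mul_le_mul_of_nonneg_left habs (by positivity)
    _ < ε := by
        have hJN : (N:ℝ) ≤ (J:ℝ) := Nat.cast_le.mpr hJ
        have hJ0 : (0:ℝ) ≤ (J:ℝ) := Nat.cast_nonneg J
        have h2J : 12 / (π * Real.sin δ * ε) < 2 * (J:ℝ) + 1 := by linarith
        have h12 : 12 < (2 * (J:ℝ) + 1) * (π * Real.sin δ * ε) :=
          (div_lt_iff₀ (by positivity)).mp h2J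
        have heq : 2/π * (3 / Real.sin δ / (2 * (J:ℝ) + 1) + 3 / Real.sin δ / (2 * (J:ℝ) + 1))
            = 12 / (π * Real.sin δ * (2 * (J:ℝ) + 1)) := by
          field_simp
          ring
        rw [heq, div_lt_iff₀ (by positivity)]
        nlinarith
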